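/- Positivity of the final order in Version 1: suppose ā(x)(1 − τρ̄′(x)x) < 1 for all x ∈ ℝ and that x₀ > 0 satisfies F⁻¹(X₀ − Nx₀(1 − ā(x₀))) = h₁(x₀) (equivalently ĥ₁(x₀) = 0). Then the final order x_N := X₀ − x₀ − (N − 1)·x₀·(1 − ā(x₀)) is strictly positive. -/

import Mathlib

open Real Filter

/-- `Fi f x = F(x) = ∫₀ˣ f(y) dy`. -/
noncomputable def Fi (f : ℝ → ℝ) (x : ℝ) : ℝ := ∫ y in (0:ℝ)..x, f y

/-- `ab τ ρ x = ā(x) = exp(−τ ρ̄(x))`. -/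
noncomputable def ab (τ : ℝ) (ρ : ℝ → ℝ) (x : ℝ) : ℝ := Real.exp (-(τ * ρ x))

/-- The function `h₁` of the generalized AFS model, Version 1. -/
noncomputable def h1 (Finv : ℝ → ℝ) (τ : ℝ) (ρ : ℝ → ℝ) (x : ℝ) : ℝ :=
  (Finv x - ab τ ρ x * (1 - τ * deriv ρ x * x) * Finv (ab τ ρ x * x)) /
    (1 - ab τ ρ x * (1 - τ * deriv ρ x * x))

/-- Positivity of the final order in Version 1: if `x₀ > 0` solves
`F⁻¹(X₀ − Nx₀(1 − ā(x₀))) = h₁(x₀)`, then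
`x_N = X₀ − x₀ − (N−1)x₀(1 − ā(x₀)) > 0`. -/
theorem final_order_positive_v1
    (f Finv : ℝ → ℝ) (hf : Continuous f) (hfpos : ∀ x, 0 < f x)
    (htop : Tendsto (Fi f) atTop atTop) (hbot : Tendsto (Fi f) atBot atBot)
    (hFinv₁ : ∀ x, Fi f (Finv x) = x) (hFinv₂ : ∀ x, Finv (Fi f x) = x)
    (τ : ℝ) (hτ : 0 < τ) (ρ : ℝ → ℝ) (hρ : ContDiff ℝ 1 ρ)
    (hρ' : ∀ x, 0 < 1 - τ * deriv ρ x * x)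
    (hlt : ∀ x, ab τ ρ x * (1 - τ * deriv ρ x * x) < 1)
    (N : ℕ) (hN : 1 ≤ N) (X₀ : ℝ) (hX₀ : 0 < X₀)
    (x₀ : ℝ) (hx₀pos : 0 < x₀)
    (hx₀ : Finv (X₀ - (N : ℝ) * (x₀ * (1 - ab τ ρ x₀))) = h1 Finv τ ρ x₀) :
    0 < X₀ - x₀ - ((N : ℝ) - 1) * (x₀ * (1 - ab τ ρ x₀)) := by

  have hapos : 0 < ab τ ρ x₀ := Real.exp_pos _
  -- strict monotonicity of Fi f
  have hmono : StrictMono (Fi f) := by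
    intro x y hxy
    have hint : ∀ u v : ℝ, IntervalIntegrable f MeasureTheory.volume u v :=
      fun u v => hf.intervalIntegrable u v
    have hpos : 0 < ∫ t in x..y, f t :=
      intervalIntegral.intervalIntegral_pos_of_pos (hint x y) hfpos hxy
    have heq : Fi f x + ∫ t in x..y, f t = Fi f y :=
      intervalIntegral.integral_add_adjacent_intervals (hint 0 x) (hint x y)
    simp only [Fi] at heq ⊢
    linarith
  have hFinvmono : StrictMono Finv := by
    intro s t hst
    by_contra h
    push_neg at h
    have h2 := hmono.monotone h
    rw [hFinv₁, hFinv₁] at h2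
    linarith
  -- a(x₀) < 1 via MVT on G x = x * a x
  have hdρ : Differentiable ℝ ρ := hρ.differentiable one_ne_zero
  have hG : ∀ x : ℝ, HasDerivAt (fun y => y * ab τ ρ y)
      (ab τ ρ x * (1 - τ * deriv ρ x * x)) x := by
    intro x
    have h1 : HasDerivAt (fun y => -(τ * ρ y)) (-(τ * deriv ρ x)) x :=
      (((hdρ x).hasDerivAt).const_mul τ).neg
    have h2 : HasDerivAt (fun y => Real.exp (-(τ * ρ y)))
        (Real.exp (-(τ * ρ x)) * (-(τ * deriv ρ x))) x := h1.exp
    have h3 : HasDerivAt (fun y => id y * Real.exp (-(τ * ρ y)))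
        (1 * Real.exp (-(τ * ρ x)) + x * (Real.exp (-(τ * ρ x)) * (-(τ * deriv ρ x)))) x :=
      (hasDerivAt_id x).mul h2
    simp only [ab]
    convert h3 using 1
    simp only [id_eq]
    ring
  have ha1 : ab τ ρ x₀ * x₀ < x₀ := by
    obtain ⟨c, hc, hceq⟩ := exists_hasDerivAt_eq_slope (fun y => y * ab τ ρ y)
      (fun x => ab τ ρ x * (1 - τ * deriv ρ x * x)) hx₀pos
      (fun x _ => (hG x).continuousAt.continuousWithinAt) (fun x _ => hG x)
    have hc1 := hlt c
    have : (x₀ * ab τ ρ x₀ - 0 * ab τ ρ 0) / (x₀ - 0) < 1 := by rw [← hceq]; exact hc1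
    rw [div_lt_one (by linarith)] at this
    nlinarith
  set a := ab τ ρ x₀ with ha
  set b := a * (1 - τ * deriv ρ x₀ * x₀) with hb
  have hb0 : 0 < b := mul_pos hapos (hρ' x₀)
  have hb1 : b < 1 := hlt x₀
  have huv : Finv (a * x₀) < Finv x₀ := hFinvmono ha1
  have hh1 : Finv (a * x₀) < h1 Finv τ ρ x₀ := by
    rw [h1]
    rw [lt_div_iff₀ (by linarith : (0:ℝ) < 1 - b)]
    show Finv (a * x₀) * (1 - b) < Finv x₀ - b * Finv (a * x₀)
    nlinarith
  have hK : a * x₀ < X₀ - (N : ℝ) * (x₀ * (1 - a)) := by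
    have h2 := hmono hh1
    rw [← hx₀, hFinv₁, hFinv₁] at h2
    exact h2
  have hexp : ((N : ℝ) - 1) * (x₀ * (1 - a)) = (N : ℝ) * (x₀ * (1 - a)) - x₀ * (1 - a) := by
    ring
  nlinarith
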